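/- arXiv:2508.06144 — 3 statements merged into one kernel-verified Lean document; each statement's English description precedes it below -/
import Mathlib

section
/- Let $H$, $Y$, $U$ be Hilbert spaces, let $A$ be skew-adjoint generating a unitary group on $H$, and $B\in\mathcal{L}(U,H)$, $C\in\mathcal{L}(H,Y)$, $K\in\mathcal{L}(Y,U)$. Let $z\in C^1([t_k,t_{k+1});H)$ solve $\dot z(t) = Az(t) + BKCz(t_k)$ with $z(t)\in\mathcal{D}(A)$, and suppose the triggering condition $\|C(z(t)-z(t_k))\|_Y \le \gamma\|z(t)\|_H$ holds on $[t_k,t_{k+1})$. Then $\big|\frac{d}{dt}\|z(t)\|_H^2\big| \le 2(\|BKC\|_{\mathcal{L}(H)} + \gamma\|BK\|_{\mathcal{L}(Y,H)})\|z(t)\|_H^2$ for all $t\in[t_k,t_{k+1})$. -/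
open Set
open scoped RealInnerProductSpace

/-- energy derivative estimate under the triggering condition. -/
theorem stmt_5
    {H Y U : Type*}
    [NormedAddCommGroup H] [InnerProductSpace ℝ H] [CompleteSpace H]
    [NormedAddCommGroup Y] [InnerProductSpace ℝ Y] [CompleteSpace Y]
    [NormedAddCommGroup U] [InnerProductSpace ℝ U] [CompleteSpace U]
    (D : Set H) (A : H → H)
    (hskew : ∀ w ∈ D, ⟪A w, w⟫ = 0)
    (B : U →L[ℝ] H) (C : H →L[ℝ] Y) (K : Y →L[ℝ] U)
    (tk tk1 γ : ℝ) (htk : tk < tk1) (hγ : 0 < γ)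
    (z : ℝ → H)
    (hzD : ∀ t ∈ Ico tk tk1, z t ∈ D)
    (hODE : ∀ t ∈ Ico tk tk1, HasDerivAt z (A (z t) + B (K (C (z tk)))) t)
    (htrig : ∀ t ∈ Ico tk tk1, ‖C (z t - z tk)‖ ≤ γ * ‖z t‖) :
    ∀ t ∈ Ico tk tk1, ∃ d : ℝ, HasDerivAt (fun s => ‖z s‖ ^ 2) d t ∧
      |d| ≤ 2 * (‖(B.comp K).comp C‖ + γ * ‖B.comp K‖) * ‖z t‖ ^ 2 := by
  intro t ht
  have hd := hODE t ht
  have hinner : HasDerivAt (fun s => ⟪z s, z s⟫)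
      (⟪z t, A (z t) + B (K (C (z tk)))⟫ + ⟪A (z t) + B (K (C (z tk))), z t⟫) t :=
    hd.inner ℝ hd
  have heq : (fun s => ‖z s‖ ^ 2) = fun s => ⟪z s, z s⟫ := by
    funext s; rw [real_inner_self_eq_norm_sq]
  have hA : ⟪A (z t), z t⟫ = 0 := hskew _ (hzD t ht)
  have hsum : ⟪z t, A (z t) + B (K (C (z tk)))⟫ + ⟪A (z t) + B (K (C (z tk))), z t⟫
      = 2 * ⟪B (K (C (z tk))), z t⟫ := by
    have h1 : ⟪z t, A (z t)⟫ = 0 := by rw [real_inner_comm]; exact hA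
    rw [inner_add_right, inner_add_left, hA, h1, real_inner_comm (z t)]; ring
  refine ⟨_, heq ▸ hinner, ?_⟩
  rw [hsum]
  have hsplit : B (K (C (z tk))) = ((B.comp K).comp C) (z t) - (B.comp K) (C (z t - z tk)) := by
    simp [map_sub]
  have hbound : |⟪B (K (C (z tk))), z t⟫| ≤
      (‖(B.comp K).comp C‖ + γ * ‖B.comp K‖) * ‖z t‖ ^ 2 := by
    rw [hsplit, inner_sub_left]
    calc |⟪((B.comp K).comp C) (z t), z t⟫ - ⟪(B.comp K) (C (z t - z tk)), z t⟫|
        ≤ |⟪((B.comp K).comp C) (z t), z t⟫| + |⟪(B.comp K) (C (z t - z tk)), z t⟫| :=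
          abs_sub _ _
      _ ≤ ‖((B.comp K).comp C) (z t)‖ * ‖z t‖ + ‖(B.comp K) (C (z t - z tk))‖ * ‖z t‖ := by
          gcongr <;> exact abs_real_inner_le_norm _ _
      _ ≤ (‖(B.comp K).comp C‖ * ‖z t‖) * ‖z t‖ + (‖B.comp K‖ * (γ * ‖z t‖)) * ‖z t‖ := by
          gcongr
          · exact ((B.comp K).comp C).le_opNorm _
          · calc ‖(B.comp K) (C (z t - z tk))‖ ≤ ‖B.comp K‖ * ‖C (z t - z tk)‖ :=
                (B.comp K).le_opNorm _
              _ ≤ ‖B.comp K‖ * (γ * ‖z t‖) := by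
                  gcongr
                  exact htrig t ht
      _ = (‖(B.comp K).comp C‖ + γ * ‖B.comp K‖) * ‖z t‖ ^ 2 := by ring
  calc |2 * ⟪B (K (C (z tk))), z t⟫| = 2 * |⟪B (K (C (z tk))), z t⟫| := by
        rw [abs_mul, abs_two]
    _ ≤ 2 * ((‖(B.comp K).comp C‖ + γ * ‖B.comp K‖) * ‖z t‖ ^ 2) := by gcongr
    _ = 2 * (‖(B.comp K).comp C‖ + γ * ‖B.comp K‖) * ‖z t‖ ^ 2 := by ring
end

section
/- Let $z\in C^1([t_k,t_{k+1}];H)$ with $C\in\mathcal{L}(H,Y)$, and set $\psi_k(t)=\|C(z(t)-z(t_k))\|_Y^2$. Suppose $\psi_k(t)\le \gamma^2\|z(t)\|_H^2$ on $[t_k,t_{k+1})$ and $\psi_k(t_{k+1}) = \gamma^2\|z(t_{k+1})\|_H^2$. Then $\gamma^2\|z(t_{k+1})\|_H^2 \le 2\gamma\|C\|_{\mathcal{L}(H,Y)}\,(t_{k+1}-t_k)\,\sup_{[t_k,t_{k+1}]}\|\dot z\|_H\,\sup_{[t_k,t_{k+1}]}\|z\|_H$, and consequently, if $z(t_{k+1})\ne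 0$, $t_{k+1}-t_k \ge \dfrac{\gamma\,\|z(t_{k+1})\|_H^2}{2\|C\|_{\mathcal{L}(H,Y)}\sup\|\dot z\|_H\,\sup\|z\|_H}$. -/
open Set

/-- lower bound on the inter-sampling time from the saturated triggering law. -/
theorem stmt_9
    {H Y : Type*}
    [NormedAddCommGroup H] [InnerProductSpace ℝ H] [CompleteSpace H]
    [NormedAddCommGroup Y] [InnerProductSpace ℝ Y] [CompleteSpace Y]
    (C : H →L[ℝ] Y) (γ : ℝ) (hγ : 0 < γ)
    (tk tk1 : ℝ) (htk : tk < tk1)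
    (z z' : ℝ → H)
    (hz : ∀ t ∈ Icc tk tk1, HasDerivAt z (z' t) t)
    (hz'cont : ContinuousOn z' (Icc tk tk1))
    (Mz Md : ℝ)
    (hMz : ∀ t ∈ Icc tk tk1, ‖z t‖ ≤ Mz)
    (hMd : ∀ t ∈ Icc tk tk1, ‖z' t‖ ≤ Md)
    (htrig : ∀ t ∈ Ico tk tk1, ‖C (z t - z tk)‖ ^ 2 ≤ γ ^ 2 * ‖z t‖ ^ 2)
    (hsat : ‖C (z tk1 - z tk)‖ ^ 2 = γ ^ 2 * ‖z tk1‖ ^ 2) :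
    γ ^ 2 * ‖z tk1‖ ^ 2 ≤ 2 * γ * ‖C‖ * (tk1 - tk) * Md * Mz ∧
      (z tk1 ≠ 0 → 0 < Md → 0 < Mz →
        γ * ‖z tk1‖ ^ 2 / (2 * ‖C‖ * Md * Mz) ≤ tk1 - tk) := by
  have hmem1 : tk1 ∈ Icc tk tk1 := ⟨le_of_lt htk, le_refl _⟩
  have hmem0 : tk ∈ Icc tk tk1 := ⟨le_refl _, le_of_lt htk⟩
  -- mean value inequality
  have hmv : ‖z tk1 - z tk‖ ≤ Md * ‖tk1 - tk‖ := by
    apply (convex_Icc tk tk1).norm_image_sub_le_of_norm_hasDerivWithin_le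
      (fun x hx => (hz x hx).hasDerivWithinAt) hMd hmem0 hmem1
  have hMd0 : 0 ≤ Md := le_trans (norm_nonneg _) (hMd tk hmem0)
  have habs : ‖tk1 - tk‖ = tk1 - tk := by
    rw [Real.norm_eq_abs, abs_of_nonneg (by linarith)]
  have hCd : ‖C (z tk1 - z tk)‖ ≤ ‖C‖ * (Md * (tk1 - tk)) := by
    calc ‖C (z tk1 - z tk)‖ ≤ ‖C‖ * ‖z tk1 - z tk‖ := C.le_opNorm _
    _ ≤ ‖C‖ * (Md * (tk1 - tk)) := by
        apply mul_le_mul_of_nonneg_left _ (norm_nonneg C)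
        rw [← habs]; exact hmv
  have heq : ‖C (z tk1 - z tk)‖ = γ * ‖z tk1‖ := by
    have h1 : (γ * ‖z tk1‖) ^ 2 = γ ^ 2 * ‖z tk1‖ ^ 2 := by ring
    have h2 := congrArg Real.sqrt (hsat.trans h1.symm)
    rwa [Real.sqrt_sq (norm_nonneg _), Real.sqrt_sq (by positivity)] at h2
  have hzMz : ‖z tk1‖ ≤ Mz := hMz tk1 hmem1
  have hMz0 : 0 ≤ Mz := le_trans (norm_nonneg _) hzMz
  have hmain : γ ^ 2 * ‖z tk1‖ ^ 2 ≤ 2 * γ * ‖C‖ * (tk1 - tk) * Md * Mz := by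
    have h2 : γ ^ 2 * ‖z tk1‖ ^ 2 = (γ * ‖z tk1‖) * ‖C (z tk1 - z tk)‖ := by
      rw [heq]; ring
    rw [h2]
    have hb : (γ * ‖z tk1‖) * ‖C (z tk1 - z tk)‖
        ≤ (γ * Mz) * (‖C‖ * (Md * (tk1 - tk))) := by
      apply mul_le_mul _ hCd (norm_nonneg _) (by positivity)
      exact mul_le_mul_of_nonneg_left hzMz hγ.le
    nlinarith [norm_nonneg C, hγ.le, sub_pos.mpr htk]
  refine ⟨hmain, fun hz1 hMdpos hMzpos => ?_⟩
  have hpos : 0 < ‖C (z tk1 - z tk)‖ := by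
    rw [heq]; exact mul_pos hγ (norm_pos_iff.mpr hz1)
  have hCpos : 0 < ‖C‖ := by
    by_contra h
    push_neg at h
    nlinarith [C.le_opNorm (z tk1 - z tk), norm_nonneg (z tk1 - z tk)]
  rw [div_le_iff₀ (by positivity)]
  nlinarith [hmain, hγ]
end

section
/- Let $V:H\to\mathbb{R}_{\ge0}$ be a functional on a Hilbert space $H$ with Fréchet gradient $\nabla V$, and constants $C_0, C_1>0$ with $C_1\|w\|^2\le V(w)$ and $\|\nabla V(w)\|\le C_0\sqrt{V(w)}$ for all $w$, and $\langle \nabla V(w), (A+BKC)w\rangle \le -2\beta V(w)$ for $w\in\mathcal{D}(A)$. If $z\in C^1([t_k,t_{k+1});H)$ solves $\dot z = (A+BKC)z + BK e_k(t)$ with $\|e_k(t)\|_Y\le \gamma\|z(t)\|_H$, then $\frac{d}{dt}V(z(t)) \le -\big(2\beta - \frac{C_0\gamma}{\sqrt{C_1}}\|BK\|_{\mathcal{L}(Y,H)}\big) V(z(t))$ for all $t\in[t_k,t_{k+1})$. -/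
open Set
open scoped RealInnerProductSpace

/-- decay of a Lyapunov functional along the perturbed closed-loop dynamics. -/
theorem stmt_10
    {H Y U : Type*}
    [NormedAddCommGroup H] [InnerProductSpace ℝ H] [CompleteSpace H]
    [NormedAddCommGroup Y] [InnerProductSpace ℝ Y] [CompleteSpace Y]
    [NormedAddCommGroup U] [InnerProductSpace ℝ U] [CompleteSpace U]
    (B : U →L[ℝ] H) (K : Y →L[ℝ] U)
    (V : H → ℝ) (gradV : H → H)
    (C₀ C₁ β γ : ℝ) (hC₀ : 0 < C₀) (hC₁ : 0 < C₁) (hβ : 0 < β) (hγ : 0 < γ)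
    (hVpos : ∀ w : H, 0 ≤ V w)
    (hlow : ∀ w : H, C₁ * ‖w‖ ^ 2 ≤ V w)
    (hgradbound : ∀ w : H, ‖gradV w‖ ≤ C₀ * Real.sqrt (V w))
    (D : Set H) (AL : H → H)
    (hLyap : ∀ w ∈ D, ⟪gradV w, AL w⟫ ≤ -(2 * β) * V w)
    (tk tk1 : ℝ) (htk : tk < tk1)
    (z : ℝ → H) (e : ℝ → Y)
    (hzD : ∀ t ∈ Ico tk tk1, z t ∈ D)
    (he : ∀ t ∈ Ico tk tk1, ‖e t‖ ≤ γ * ‖z t‖)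
    (hODE : ∀ t ∈ Ico tk tk1, HasDerivAt z (AL (z t) + B (K (e t))) t)
    (hchain : ∀ t ∈ Ico tk tk1,
      HasDerivAt (fun s => V (z s)) (⟪gradV (z t), AL (z t) + B (K (e t))⟫) t) :
    ∀ t ∈ Ico tk tk1,
      ⟪gradV (z t), AL (z t) + B (K (e t))⟫ ≤
        -(2 * β - C₀ * γ / Real.sqrt C₁ * ‖B.comp K‖) * V (z t) := by
  intro t ht
  set g := gradV (z t) with hg
  set w := z t with hw
  have hV : 0 ≤ V w := hVpos w
  have hsV : Real.sqrt (V w) * Real.sqrt (V w) = V w := Real.mul_self_sqrt hV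
  have hz : ‖w‖ ≤ Real.sqrt (V w) / Real.sqrt C₁ := by
    rw [le_div_iff₀ (Real.sqrt_pos.mpr hC₁)]
    have : ‖w‖ * Real.sqrt C₁ = Real.sqrt (C₁ * ‖w‖ ^ 2) := by
      rw [Real.sqrt_mul hC₁.le, Real.sqrt_sq (norm_nonneg w), mul_comm]
    rw [this]
    exact Real.sqrt_le_sqrt (hlow w)
  have h1 : ⟪g, AL w⟫ ≤ -(2 * β) * V w := hLyap w (hzD t ht)
  have h2 : ⟪g, B (K (e t))⟫ ≤ C₀ * γ / Real.sqrt C₁ * ‖B.comp K‖ * V w := by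
    have hBK : B (K (e t)) = (B.comp K) (e t) := rfl
    calc ⟪g, B (K (e t))⟫ ≤ ‖g‖ * ‖B (K (e t))‖ := real_inner_le_norm _ _
      _ ≤ ‖g‖ * (‖B.comp K‖ * ‖e t‖) := by
          apply mul_le_mul_of_nonneg_left _ (norm_nonneg g)
          rw [hBK]; exact (B.comp K).le_opNorm _
      _ ≤ (C₀ * Real.sqrt (V w)) * (‖B.comp K‖ * (γ * (Real.sqrt (V w) / Real.sqrt C₁))) := by
          apply mul_le_mul (hgradbound w) _ (by positivity) (by positivity)
          apply mul_le_mul_of_nonneg_left _ (norm_nonneg _)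
          calc ‖e t‖ ≤ γ * ‖w‖ := he t ht
            _ ≤ γ * (Real.sqrt (V w) / Real.sqrt C₁) :=
                mul_le_mul_of_nonneg_left hz hγ.le
      _ = C₀ * γ / Real.sqrt C₁ * ‖B.comp K‖ * V w := by
          field_simp
          ring_nf
          rw [Real.sq_sqrt hV]
          ring
  have := add_le_add h1 h2
  calc ⟪g, AL w + B (K (e t))⟫ = ⟪g, AL w⟫ + ⟪g, B (K (e t))⟫ := inner_add_right _ _ _
    _ ≤ -(2 * β) * V w + C₀ * γ / Real.sqrt C₁ * ‖B.comp K‖ * V w := this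
    _ = -(2 * β - C₀ * γ / Real.sqrt C₁ * ‖B.comp K‖) * V w := by ring
end
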